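/- arXiv:1811.09266 — 2 statements merged into one kernel-verified Lean document; each statement's English description precedes it below -/
import Mathlib

section
/- Let 0 < δ < 1 and λ > 0, and let C(t;δ,λ) = (1 + t^δ)^{−λ/δ} be the Generalized Cauchy function. Fix 0 < β₁ < β₂ and ε > 0, and let K_{ε;β₂,β₁}[C](t) = (β₂^ε C(t/β₂;δ,λ) − β₁^ε C(t/β₁;δ,λ))/(β₂^ε − β₁^ε) for t ≥ 0. If ε ≥ δ, then K_{ε;β₂,β₁}[C] belongs to Φ_∞ (i.e., to Φ_d for every positive integer d). -/
open MeasureTheory Real Filter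

noncomputable section

/-- Membership in the class `Φ_d`: continuous on `[0,∞)`, value `1` at `0`, and
`x ↦ φ(‖x‖)` positive definite on `ℝ^d`. -/
def MemPhi (d : ℕ) (φ : ℝ → ℝ) : Prop :=
  ContinuousOn φ (Set.Ici 0) ∧ φ 0 = 1 ∧
    ∀ (N : ℕ) (x : Fin N → EuclideanSpace ℝ (Fin d)) (a : Fin N → ℝ),
      0 ≤ ∑ k : Fin N, ∑ h : Fin N, a k * a h * φ ‖x k - x h‖

/-- The Zastavnyi operator `K_{ε;β₂,β₁}[φ]`. -/
def zastavnyi (ε β₁ β₂ : ℝ) (φ : ℝ → ℝ) (t : ℝ) : ℝ :=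
  (β₂ ^ ε * φ (t / β₂) - β₁ ^ ε * φ (t / β₁)) / (β₂ ^ ε - β₁ ^ ε)

/-- The modified Bessel function of the second kind of order `ν`. -/
def besselK (ν t : ℝ) : ℝ :=
  ∫ u in Set.Ioi (0 : ℝ), Real.exp (-t * Real.cosh u) * Real.cosh (ν * u)

/-- The Matérn function with smoothness parameter `ν`. -/
def matern (ν t : ℝ) : ℝ :=
  if t = 0 then 1 else 2 ^ (1 - ν) / Real.Gamma ν * t ^ ν * besselK ν t

/-- The Generalized Cauchy function. -/
def genCauchy (δ lam t : ℝ) : ℝ := (1 + t ^ δ) ^ (-(lam / δ))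

/-- The Generalized Wendland function. -/
def genWendland (κ μ t : ℝ) : ℝ :=
  if 1 ≤ t then 0
  else if κ = 0 then (1 - t) ^ μ
  else (∫ u in Set.Ioc t 1, u * (u ^ 2 - t ^ 2) ^ (κ - 1) * (1 - u) ^ μ) /
    (Real.Gamma (2 * κ) * Real.Gamma (μ + 1) / Real.Gamma (2 * κ + μ + 1))

/-- The `d`-dimensional radial Fourier transform of a radial function `x ↦ φ(‖x‖)`,
evaluated at a frequency of norm `z` (taken in the direction of the first coordinate;
the imaginary part vanishes by radial symmetry). -/
def radialFT (d : ℕ) [NeZero d] (φ : ℝ → ℝ) (z : ℝ) : ℝ :=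
  (2 * Real.pi) ^ (-(d : ℝ)) *
    ∫ x : EuclideanSpace ℝ (Fin d), Real.cos (z * x 0) * φ ‖x‖

namespace ZOP

open MeasureTheory Real Set Filter


variable {N : ℕ}

def QF (a : Fin N → ℝ) (K : Fin N → Fin N → ℝ) : ℝ := ∑ k, ∑ h, a k * a h * K k h

def IsPSD (K : Fin N → Fin N → ℝ) : Prop := (∀ k h, K k h = K h k) ∧ ∀ a, 0 ≤ QF a K

def IsCND (K : Fin N → Fin N → ℝ) : Prop :=
  (∀ k h, K k h = K h k) ∧ ∀ a, (∑ k, a k) = 0 → QF a K ≤ 0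

lemma QF_eq (a : Fin N → ℝ) (K : Fin N → Fin N → ℝ) :
    QF a K = dotProduct (star a) ((Matrix.of K).mulVec a) := by
  simp only [QF, dotProduct, Matrix.mulVec, Matrix.of_apply, star_trivial,
    dotProduct]
  refine Finset.sum_congr rfl fun k _ => ?_
  rw [Finset.mul_sum]
  refine Finset.sum_congr rfl fun h _ => by ring

lemma IsPSD.of_eq {K L : Fin N → Fin N → ℝ} (h : IsPSD K) (he : ∀ k l, L k l = K k l) :
    IsPSD L := by
  have : L = K := funext fun k => funext fun l => he k l
  rw [this]; exact h

lemma IsPSD.posSemidef {K : Fin N → Fin N → ℝ} (h : IsPSD K) :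
    (Matrix.of K).PosSemidef := by
  rw [Matrix.posSemidef_iff_dotProduct_mulVec]
  constructor
  · ext k h'
    simp [Matrix.conjTranspose_apply, h.1 k h']
  · intro x
    have := h.2 x
    rw [QF_eq] at this
    simpa using this

open scoped MatrixOrder in
lemma IsPSD.decomp {K : Fin N → Fin N → ℝ} (h : IsPSD K) :
    ∃ B : Matrix (Fin N) (Fin N) ℝ, ∀ k l, K k l = ∑ i, B i k * B i l := by
  obtain ⟨B, hB⟩ := CStarAlgebra.nonneg_iff_eq_star_mul_self.mp h.posSemidef.nonneg
  refine ⟨B, fun k l => ?_⟩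
  have := congrArg (fun M => M k l) hB
  simpa [Matrix.mul_apply, Matrix.conjTranspose_apply, Matrix.star_eq_conjTranspose] using this

lemma IsPSD.schur {K L : Fin N → Fin N → ℝ} (hK : IsPSD K) (hL : IsPSD L) :
    IsPSD (fun k l => K k l * L k l) := by
  obtain ⟨B, hB⟩ := hK.decomp
  refine ⟨fun k l => by simp only []; rw [hK.1 k l, hL.1 k l], fun a => ?_⟩
  have key : QF a (fun k l => K k l * L k l)
      = ∑ i, QF (fun k => a k * B i k) L := by
    calc QF a (fun k l => K k l * L k l)
        = ∑ k, ∑ l, ∑ i, (a k * B i k) * ((a l * B i l) * L k l) := by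
          simp only [QF]
          refine Finset.sum_congr rfl fun k _ => Finset.sum_congr rfl fun l _ => ?_
          rw [hB k l, Finset.sum_mul, Finset.mul_sum]
          exact Finset.sum_congr rfl fun i _ => by ring
      _ = ∑ k, ∑ i, ∑ l, (a k * B i k) * ((a l * B i l) * L k l) :=
          Finset.sum_congr rfl fun k _ => Finset.sum_comm
      _ = ∑ i, ∑ k, ∑ l, (a k * B i k) * ((a l * B i l) * L k l) := Finset.sum_comm
      _ = ∑ i, QF (fun k => a k * B i k) L := by
          refine Finset.sum_congr rfl fun i _ => ?_
          simp only [QF]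
          exact Finset.sum_congr rfl fun k _ => Finset.sum_congr rfl fun l _ => by ring
  rw [key]
  exact Finset.sum_nonneg fun i _ => hL.2 _

lemma IsPSD.const {c : ℝ} (hc : 0 ≤ c) : IsPSD (fun _ _ : Fin N => c) := by
  refine ⟨fun _ _ => rfl, fun a => ?_⟩
  have : QF a (fun _ _ : Fin N => c) = c * (∑ k, a k) ^ 2 := by
    simp only [QF]
    rw [sq, Finset.sum_mul_sum, Finset.mul_sum]
    refine Finset.sum_congr rfl fun k _ => ?_
    rw [Finset.mul_sum]
    refine Finset.sum_congr rfl fun l _ => by ring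
  rw [this]
  positivity

lemma IsPSD.add {K L : Fin N → Fin N → ℝ} (hK : IsPSD K) (hL : IsPSD L) :
    IsPSD (fun k l => K k l + L k l) := by
  refine ⟨fun k l => by simp only []; rw [hK.1 k l, hL.1 k l], fun a => ?_⟩
  have : QF a (fun k l => K k l + L k l) = QF a K + QF a L := by
    simp only [QF, ← Finset.sum_add_distrib]
    exact Finset.sum_congr rfl fun k _ => Finset.sum_congr rfl fun l _ => by ring
  rw [this]
  exact add_nonneg (hK.2 a) (hL.2 a)

lemma IsPSD.smul {K : Fin N → Fin N → ℝ} (hK : IsPSD K) {c : ℝ} (hc : 0 ≤ c) :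
    IsPSD (fun k l => c * K k l) := by
  refine ⟨fun k l => by simp only []; rw [hK.1 k l], fun a => ?_⟩
  have : QF a (fun k l => c * K k l) = c * QF a K := by
    simp only [QF, Finset.mul_sum]
    exact Finset.sum_congr rfl fun k _ => Finset.sum_congr rfl fun l _ => by ring
  rw [this]
  exact mul_nonneg hc (hK.2 a)

lemma IsPSD.diagMul {K : Fin N → Fin N → ℝ} (hK : IsPSD K) (d : Fin N → ℝ) :
    IsPSD (fun k l => d k * d l * K k l) := by
  refine ⟨fun k l => by simp only []; rw [hK.1 k l]; ring, fun a => ?_⟩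
  have : QF a (fun k l => d k * d l * K k l) = QF (fun k => a k * d k) K := by
    simp only [QF]
    exact Finset.sum_congr rfl fun k _ => Finset.sum_congr rfl fun l _ => by ring
  rw [this]
  exact hK.2 _

lemma IsPSD.powEntry {K : Fin N → Fin N → ℝ} (hK : IsPSD K) (n : ℕ) :
    IsPSD (fun k l => K k l ^ n) := by
  induction n with
  | zero => simpa using IsPSD.const (le_of_lt one_pos)
  | succ n ih => simpa [pow_succ] using ih.schur hK

lemma exp_tsum (x : ℝ) : Real.exp x = ∑' n : ℕ, x ^ n / n.factorial := by
  rw [Real.exp_eq_exp_ℝ, NormedSpace.exp_eq_tsum_div]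

lemma IsPSD.expEntry {K : Fin N → Fin N → ℝ} (hK : IsPSD K) :
    IsPSD (fun k l => Real.exp (K k l)) := by
  refine ⟨fun k l => by simp only []; rw [hK.1 k l], fun a => ?_⟩
  have hsummable : ∀ k l : Fin N, Summable
      (fun n : ℕ => a k * a l * (K k l ^ n / n.factorial)) := fun k l =>
    (Real.summable_pow_div_factorial (K k l)).mul_left _
  have pt : ∀ k l : Fin N, a k * a l * Real.exp (K k l)
      = ∑' n : ℕ, a k * a l * (K k l ^ n / n.factorial) := fun k l => by
    rw [exp_tsum, tsum_mul_left]
  have key : QF a (fun k l => Real.exp (K k l))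
      = ∑' n : ℕ, ∑ k, ∑ l, a k * a l * (K k l ^ n / n.factorial) := by
    simp only [QF, pt]
    rw [Finset.sum_congr rfl fun k _ => (Summable.tsum_finsetSum (fun l _ => hsummable k l)).symm]
    exact (Summable.tsum_finsetSum (fun k (_ : k ∈ Finset.univ) =>
      summable_sum (fun l _ => hsummable k l))).symm
  rw [key]
  refine tsum_nonneg fun n => ?_
  have : ∑ k, ∑ l, a k * a l * (K k l ^ n / n.factorial)
      = (n.factorial : ℝ)⁻¹ * QF a (fun k l => K k l ^ n) := by
    simp only [QF, Finset.mul_sum]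
    exact Finset.sum_congr rfl fun k _ => Finset.sum_congr rfl fun l _ => by
      field_simp
  rw [this]
  exact mul_nonneg (by positivity) ((hK.powEntry n).2 a)

lemma sum_ite_collapse (c : ℝ) (n₀ : Fin N) (f : Fin N → ℝ) :
    ∑ l, (if l = n₀ then c else 0) * f l = c * f n₀ := by
  simp [ite_mul, Finset.sum_ite_eq']

lemma IsCND.expNeg {A : Fin N → Fin N → ℝ} (hA : IsCND A) :
    IsPSD (fun k l => Real.exp (-A k l)) := by
  rcases Nat.eq_zero_or_pos N with hN | hN
  · subst hN
    exact ⟨fun k l => k.elim0, fun a => le_of_eq (by simp [QF])⟩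
  set n₀ : Fin N := ⟨0, hN⟩
  set B : Fin N → Fin N → ℝ := fun k l => A k n₀ + A n₀ l - A k l - A n₀ n₀ with hBdef
  have hBpsd : IsPSD B := by
    refine ⟨fun k l => by
      simp only [hBdef]; rw [hA.1 k l, hA.1 k n₀, hA.1 l n₀, hA.1 n₀ l]; ring, fun a => ?_⟩
    set S := ∑ k, a k with hS
    set c : Fin N → ℝ := fun k => if k = n₀ then -S else 0 with hc
    set b : Fin N → ℝ := fun k => a k + c k with hb
    have hbsum : ∑ k, b k = 0 := by
      simp only [hb, hc, Finset.sum_add_distrib, Finset.sum_ite_eq', Finset.mem_univ,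
        if_true, ← hS]
      ring
    have hQFb := hA.2 b hbsum
    -- auxiliary sums
    have cross1 : ∑ k, ∑ l, a k * c l * A k l = -S * ∑ k, a k * A k n₀ := by
      rw [Finset.mul_sum]
      refine Finset.sum_congr rfl fun k _ => ?_
      calc ∑ l, a k * c l * A k l = ∑ l, (if l = n₀ then -S else 0) * (a k * A k l) := by
            refine Finset.sum_congr rfl fun l _ => ?_
            simp only [hc]; ring
        _ = -S * (a k * A k n₀) := sum_ite_collapse _ _ _
        _ = -S * (a k * A k n₀) := rfl
    have cross2 : ∑ k, ∑ l, c k * a l * A k l = -S * ∑ l, a l * A n₀ l := by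
      calc ∑ k, ∑ l, c k * a l * A k l
          = ∑ k, (if k = n₀ then -S else 0) * (∑ l, a l * A k l) := by
            refine Finset.sum_congr rfl fun k _ => ?_
            rw [Finset.mul_sum]
            refine Finset.sum_congr rfl fun l _ => ?_
            simp only [hc]; ring
        _ = -S * ∑ l, a l * A n₀ l := sum_ite_collapse _ _ _
    have cross3 : ∑ k, ∑ l, c k * c l * A k l = S * S * A n₀ n₀ := by
      calc ∑ k, ∑ l, c k * c l * A k l
          = ∑ k, (if k = n₀ then -S else 0) * (∑ l, c l * A k l) := by
            refine Finset.sum_congr rfl fun k _ => ?_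
            rw [Finset.mul_sum]
            refine Finset.sum_congr rfl fun l _ => ?_
            ring
        _ = -S * ∑ l, c l * A n₀ l := sum_ite_collapse _ _ _
        _ = -S * (-S * A n₀ n₀) := by
            rw [Finset.sum_congr rfl fun l _ => (by simp only [hc] :
              c l * A n₀ l = (if l = n₀ then -S else 0) * A n₀ l),
              sum_ite_collapse (-S) n₀ (fun l => A n₀ l)]
        _ = S * S * A n₀ n₀ := by ring
    have tA1 : ∑ k, ∑ l, a k * a l * A k n₀ = S * ∑ k, a k * A k n₀ := by
      calc ∑ k, ∑ l, a k * a l * A k n₀ = ∑ k, (a k * A k n₀) * S := by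
            refine Finset.sum_congr rfl fun k _ => ?_
            calc ∑ l, a k * a l * A k n₀ = ∑ l, (a k * A k n₀) * a l :=
                  Finset.sum_congr rfl fun l _ => by ring
              _ = (a k * A k n₀) * S := by rw [← Finset.mul_sum]
        _ = S * ∑ k, a k * A k n₀ := by rw [← Finset.sum_mul]; ring
    have tA2 : ∑ k, ∑ l, a k * a l * A n₀ l = S * ∑ l, a l * A n₀ l := by
      calc ∑ k, ∑ l, a k * a l * A n₀ l = ∑ k, a k * ∑ l, a l * A n₀ l := by
            refine Finset.sum_congr rfl fun k _ => ?_
            rw [Finset.mul_sum]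
            exact Finset.sum_congr rfl fun l _ => by ring
        _ = S * ∑ l, a l * A n₀ l := by rw [← Finset.sum_mul]
    have tA4 : ∑ k, ∑ l, a k * a l * A n₀ n₀ = S * S * A n₀ n₀ := by
      calc ∑ k, ∑ l, a k * a l * A n₀ n₀ = ∑ k, a k * (A n₀ n₀ * S) := by
            refine Finset.sum_congr rfl fun k _ => ?_
            calc ∑ l, a k * a l * A n₀ n₀ = ∑ l, (a k * A n₀ n₀) * a l :=
                  Finset.sum_congr rfl fun l _ => by ring
              _ = (a k * A n₀ n₀) * S := by rw [← Finset.mul_sum]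
              _ = a k * (A n₀ n₀ * S) := by ring
        _ = S * S * A n₀ n₀ := by rw [← Finset.sum_mul]; ring
    have expandB : QF a B = S * (∑ k, a k * A k n₀) + S * (∑ l, a l * A n₀ l)
        - QF a A - S * S * A n₀ n₀ := by
      have step : QF a B = (∑ k, ∑ l, a k * a l * A k n₀) + (∑ k, ∑ l, a k * a l * A n₀ l)
          - QF a A - (∑ k, ∑ l, a k * a l * A n₀ n₀) := by
        simp only [QF, hBdef, ← Finset.sum_add_distrib, ← Finset.sum_sub_distrib]
        exact Finset.sum_congr rfl fun k _ => Finset.sum_congr rfl fun l _ => by ring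
      rw [step, tA1, tA2, tA4]
    have expandb : QF b A = QF a A + (∑ k, ∑ l, a k * c l * A k l)
        + (∑ k, ∑ l, c k * a l * A k l) + (∑ k, ∑ l, c k * c l * A k l) := by
      simp only [QF, hb, ← Finset.sum_add_distrib]
      exact Finset.sum_congr rfl fun k _ => Finset.sum_congr rfl fun l _ => by ring
    have : QF a B = -(QF b A) := by
      rw [expandB, expandb, cross1, cross2, cross3]; ring
    rw [this]
    linarith
  -- now conclude
  have key : ∀ k l : Fin N, Real.exp (-A k l)
      = Real.exp (A n₀ n₀) * ((Real.exp (-A k n₀) * Real.exp (-A n₀ l)) * Real.exp (B k l)) := by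
    intro k l
    rw [← Real.exp_add, ← Real.exp_add, ← Real.exp_add]
    congr 1
    simp only [hBdef]
    ring
  have hsym : ∀ k l : Fin N, Real.exp (-A n₀ l) = Real.exp (-A l n₀) := fun k l => by
    rw [hA.1 n₀ l]
  have base : IsPSD (fun k l : Fin N =>
      Real.exp (A n₀ n₀) * ((fun m => Real.exp (-A m n₀)) k * (fun m => Real.exp (-A m n₀)) l
        * Real.exp (B k l))) :=
    (hBpsd.expEntry.diagMul (fun m => Real.exp (-A m n₀))).smul (Real.exp_nonneg _)
  refine base.of_eq fun k l => ?_
  simp only []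
  rw [key k l, hA.1 n₀ l]


/-! ### Scalar integral lemmas -/

lemma one_sub_exp_le (x : ℝ) : 1 - Real.exp (-x) ≤ x := by
  have := Real.add_one_le_exp (-x)
  linarith

lemma one_sub_exp_nonneg {x : ℝ} (hx : 0 ≤ x) : 0 ≤ 1 - Real.exp (-x) := by
  have : Real.exp (-x) ≤ 1 := Real.exp_le_one_iff.mpr (by linarith)
  linarith

noncomputable def Ilevy (γ : ℝ) : ℝ := ∫ w in Ioi 0, (1 - Real.exp (-w)) * w ^ (-1 - γ)

lemma levy_meas (r γ : ℝ) :
    Measurable (fun w : ℝ => (1 - Real.exp (-(w * r))) * w ^ (-1 - γ)) := by fun_prop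

lemma integrableOn_levy_one {γ : ℝ} (hγ0 : 0 < γ) (hγ1 : γ < 1) :
    IntegrableOn (fun w : ℝ => (1 - Real.exp (-w)) * w ^ (-1 - γ)) (Ioi 0) := by
  have hmeas : Measurable (fun w : ℝ => (1 - Real.exp (-w)) * w ^ (-1 - γ)) := by
    have := levy_meas 1 γ; simpa using this
  have hsplit : Ioc (0:ℝ) 1 ∪ Ioi 1 = Ioi (0:ℝ) := Ioc_union_Ioi_eq_Ioi zero_le_one
  rw [← hsplit]
  apply IntegrableOn.union
  · have hg : IntegrableOn (fun w : ℝ => w ^ (-γ)) (Ioc (0:ℝ) 1) := by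
      have h1 := intervalIntegral.intervalIntegrable_rpow' (a := 0) (b := 1) (r := -γ)
        (by linarith)
      rwa [intervalIntegrable_iff_integrableOn_Ioc_of_le zero_le_one] at h1
    refine MeasureTheory.Integrable.mono hg hmeas.aestronglyMeasurable ?_
    rw [ae_restrict_iff' measurableSet_Ioc]
    refine ae_of_all _ fun w hw => ?_
    have hw0 : 0 < w := hw.1
    have hf0 : 0 ≤ (1 - Real.exp (-w)) * w ^ (-1 - γ) :=
      mul_nonneg (one_sub_exp_nonneg hw0.le) (Real.rpow_nonneg hw0.le _)
    rw [Real.norm_eq_abs, Real.norm_eq_abs, abs_of_nonneg hf0,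
      abs_of_nonneg (Real.rpow_nonneg hw0.le _)]
    calc (1 - Real.exp (-w)) * w ^ (-1 - γ) ≤ w * w ^ (-1 - γ) :=
          mul_le_mul_of_nonneg_right (one_sub_exp_le w) (Real.rpow_nonneg hw0.le _)
      _ = w ^ (-γ) := by
          rw [mul_comm, ← Real.rpow_add_one hw0.ne' (-1 - γ)]
          norm_num
          rw [show -1 - γ + 1 = -γ by ring]
  · have hg : IntegrableOn (fun w : ℝ => w ^ (-1 - γ)) (Ioi (1:ℝ)) :=
      integrableOn_Ioi_rpow_of_lt (by linarith) one_pos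
    refine MeasureTheory.Integrable.mono hg hmeas.aestronglyMeasurable ?_
    rw [ae_restrict_iff' measurableSet_Ioi]
    refine ae_of_all _ fun w hw => ?_
    have hw0 : (0:ℝ) < w := lt_trans one_pos hw
    have hf0 : 0 ≤ (1 - Real.exp (-w)) * w ^ (-1 - γ) :=
      mul_nonneg (one_sub_exp_nonneg hw0.le) (Real.rpow_nonneg hw0.le _)
    rw [Real.norm_eq_abs, Real.norm_eq_abs, abs_of_nonneg hf0,
      abs_of_nonneg (Real.rpow_nonneg hw0.le _)]
    have h1 : 1 - Real.exp (-w) ≤ 1 := by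
      have := Real.exp_pos (-w); linarith
    calc (1 - Real.exp (-w)) * w ^ (-1 - γ) ≤ 1 * w ^ (-1 - γ) :=
          mul_le_mul_of_nonneg_right h1 (Real.rpow_nonneg hw0.le _)
      _ = w ^ (-1 - γ) := one_mul _

lemma integrableOn_levy {γ : ℝ} (hγ0 : 0 < γ) (hγ1 : γ < 1) {r : ℝ} (hr : 0 ≤ r) :
    IntegrableOn (fun w : ℝ => (1 - Real.exp (-(w * r))) * w ^ (-1 - γ)) (Ioi 0) := by
  rcases eq_or_lt_of_le hr with h0 | hr
  · refine (integrableOn_zero).congr_fun (fun w hw => ?_) measurableSet_Ioi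
    simp [← h0]
  · have base := integrableOn_levy_one hγ0 hγ1
    set g : ℝ → ℝ := fun w => (1 - Real.exp (-w)) * w ^ (-1 - γ) with hg
    have comp : IntegrableOn (fun w => g (r * w)) (Ioi (0:ℝ)) := by
      refine (integrableOn_Ioi_comp_mul_left_iff g 0 hr).mpr ?_
      rwa [mul_zero]
    have comp2 : IntegrableOn (fun w => r ^ (1 + γ) * g (r * w)) (Ioi (0:ℝ)) :=
      comp.const_mul _
    refine IntegrableOn.congr_fun comp2 (fun w hw => ?_) measurableSet_Ioi
    have hw0 : (0:ℝ) < w := hw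
    simp only [hg]
    rw [Real.mul_rpow hr.le hw0.le, mul_comm r w]
    have h2 : r ^ (1 + γ) * ((1 - Real.exp (-(w * r))) * (r ^ (-1 - γ) * w ^ (-1 - γ)))
        = (r ^ (1 + γ) * r ^ (-1 - γ)) * ((1 - Real.exp (-(w * r))) * w ^ (-1 - γ)) := by ring
    rw [h2, ← Real.rpow_add hr]
    norm_num

lemma levy_value {γ : ℝ} (hγ0 : 0 < γ) (hγ1 : γ < 1) {r : ℝ} (hr : 0 ≤ r) :
    ∫ w in Ioi 0, (1 - Real.exp (-(w * r))) * w ^ (-1 - γ) = r ^ γ * Ilevy γ := by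
  rcases eq_or_lt_of_le hr with h0 | hr
  · rw [← h0, Real.zero_rpow hγ0.ne', zero_mul]
    rw [setIntegral_congr_fun measurableSet_Ioi (g := fun _ => (0:ℝ)) (fun w hw => by simp)]
    simp
  · set g : ℝ → ℝ := fun w => (1 - Real.exp (-w)) * w ^ (-1 - γ) with hg
    have key : ∀ w ∈ Ioi (0:ℝ), (1 - Real.exp (-(w * r))) * w ^ (-1 - γ)
        = r ^ (1 + γ) * g (r * w) := by
      intro w hw
      have hw0 : (0:ℝ) < w := hw
      simp only [hg]
      rw [Real.mul_rpow hr.le hw0.le, mul_comm r w]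
      have : r ^ (1 + γ) * ((1 - Real.exp (-(w * r))) * (r ^ (-1 - γ) * w ^ (-1 - γ)))
          = (r ^ (1 + γ) * r ^ (-1 - γ)) * ((1 - Real.exp (-(w * r))) * w ^ (-1 - γ)) := by
        ring
      rw [this, ← Real.rpow_add hr]
      norm_num
    rw [setIntegral_congr_fun measurableSet_Ioi key, integral_const_mul,
      integral_comp_mul_left_Ioi g 0 hr, mul_zero]
    simp only [smul_eq_mul, Ilevy]
    rw [← mul_assoc, ← Real.rpow_neg_one r, ← Real.rpow_add hr]
    have h3 : 1 + γ + -1 = γ := by ring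
    rw [h3]

lemma Ilevy_pos {γ : ℝ} (hγ0 : 0 < γ) (hγ1 : γ < 1) : 0 < Ilevy γ := by
  rw [Ilevy]
  have hnn : 0 ≤ᶠ[ae (volume.restrict (Ioi (0:ℝ)))]
      (fun w : ℝ => (1 - Real.exp (-w)) * w ^ (-1 - γ)) := by
    refine (ae_restrict_iff' measurableSet_Ioi).mpr (ae_of_all _ fun w hw => ?_)
    have hw0 : (0:ℝ) < w := hw
    exact mul_nonneg (one_sub_exp_nonneg hw0.le) (Real.rpow_nonneg hw0.le _)
  rw [setIntegral_pos_iff_support_of_nonneg_ae hnn (integrableOn_levy_one hγ0 hγ1)]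
  · have hsub : Ioi (0:ℝ) ⊆ Function.support (fun w : ℝ => (1 - Real.exp (-w)) * w ^ (-1 - γ))
        ∩ Ioi 0 := by
      intro w hw
      have hw0 : (0:ℝ) < w := hw
      have h1 : 0 < 1 - Real.exp (-w) := by
        have : Real.exp (-w) < 1 := Real.exp_lt_one_iff.mpr (by linarith)
        linarith
      exact ⟨ne_of_gt (mul_pos h1 (Real.rpow_pos_of_pos hw0 _)), hw⟩
    calc (0:ENNReal) < volume (Ioi (0:ℝ)) := by simp [Real.volume_Ioi]
      _ ≤ _ := measure_mono hsub

lemma rpow_eq_levy_integral {γ : ℝ} (hγ0 : 0 < γ) (hγ1 : γ < 1) {r : ℝ} (hr : 0 ≤ r) :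
    r ^ γ = (Ilevy γ)⁻¹ * ∫ w in Ioi 0, (1 - Real.exp (-(w * r))) * w ^ (-1 - γ) := by
  rw [levy_value hγ0 hγ1 hr]
  field_simp [(Ilevy_pos hγ0 hγ1).ne']
  try ring

/-! ### Gamma-type integrals -/

lemma integrableOn_gammaKernel {p c : ℝ} (hp : 0 < p) (hc : 0 < c) :
    IntegrableOn (fun σ : ℝ => σ ^ (p - 1) * Real.exp (-(c * σ))) (Ioi 0) := by
  have base := Real.GammaIntegral_convergent hp
  have comp : IntegrableOn (fun σ : ℝ => Real.exp (-(c * σ)) * (c * σ) ^ (p - 1)) (Ioi 0) := by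
    refine (integrableOn_Ioi_comp_mul_left_iff
      (fun x => Real.exp (-x) * x ^ (p - 1)) 0 hc).mpr ?_
    rwa [mul_zero]
  have comp2 : IntegrableOn (fun σ : ℝ => c ^ (1 - p) * (Real.exp (-(c * σ)) * (c * σ) ^ (p - 1)))
      (Ioi (0:ℝ)) := comp.const_mul _
  refine IntegrableOn.congr_fun comp2 (fun σ hσ => ?_) measurableSet_Ioi
  have hσ0 : (0:ℝ) < σ := hσ
  rw [Real.mul_rpow hc.le hσ0.le]
  have h2 : c ^ (1 - p) * (Real.exp (-(c * σ)) * (c ^ (p - 1) * σ ^ (p - 1)))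
      = (c ^ (1 - p) * c ^ (p - 1)) * (σ ^ (p - 1) * Real.exp (-(c * σ))) := by ring
  rw [h2, ← Real.rpow_add hc]
  norm_num

lemma integral_gammaKernel {p c : ℝ} (hp : 0 < p) (hc : 0 < c) :
    ∫ σ in Ioi 0, σ ^ (p - 1) * Real.exp (-(c * σ)) = Real.Gamma p * c ^ (-p) := by
  have key : ∀ σ ∈ Ioi (0:ℝ), σ ^ (p - 1) * Real.exp (-(c * σ))
      = c ^ (1 - p) * (Real.exp (-(c * σ)) * (c * σ) ^ (p - 1)) := by
    intro σ hσ
    have hσ0 : (0:ℝ) < σ := hσ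
    rw [Real.mul_rpow hc.le hσ0.le]
    have : c ^ (1 - p) * (Real.exp (-(c * σ)) * (c ^ (p - 1) * σ ^ (p - 1)))
        = (c ^ (1 - p) * c ^ (p - 1)) * (σ ^ (p - 1) * Real.exp (-(c * σ))) := by ring
    rw [this, ← Real.rpow_add hc]
    norm_num
  rw [setIntegral_congr_fun measurableSet_Ioi key, integral_const_mul,
    integral_comp_mul_left_Ioi (fun x => Real.exp (-x) * x ^ (p - 1)) 0 hc, mul_zero,
    ← Real.Gamma_eq_integral hp]
  simp only [smul_eq_mul]
  rw [← mul_assoc, mul_comm (c ^ (1-p)) c⁻¹, ← Real.rpow_neg_one c, ← Real.rpow_add hc]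
  have : -1 + (1 - p) = -p := by ring
  rw [this, mul_comm]


/-! ### QF equation lemmas -/

lemma QF_congr {N : ℕ} (a : Fin N → ℝ) {K L : Fin N → Fin N → ℝ}
    (h : ∀ k l, K k l = L k l) : QF a K = QF a L := by
  have : K = L := funext fun k => funext fun l => h k l
  rw [this]

lemma QF_const_mul {N : ℕ} (a : Fin N → ℝ) (c : ℝ) (K : Fin N → Fin N → ℝ) :
    QF a (fun k l => c * K k l) = c * QF a K := by
  simp only [QF, Finset.mul_sum]
  exact Finset.sum_congr rfl fun k _ => Finset.sum_congr rfl fun l _ => by ring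

lemma QF_add {N : ℕ} (a : Fin N → ℝ) (K L : Fin N → Fin N → ℝ) :
    QF a (fun k l => K k l + L k l) = QF a K + QF a L := by
  simp only [QF, ← Finset.sum_add_distrib]
  exact Finset.sum_congr rfl fun k _ => Finset.sum_congr rfl fun l _ => by ring

lemma QF_sub {N : ℕ} (a : Fin N → ℝ) (K L : Fin N → Fin N → ℝ) :
    QF a (fun k l => K k l - L k l) = QF a K - QF a L := by
  simp only [QF, ← Finset.sum_sub_distrib]
  exact Finset.sum_congr rfl fun k _ => Finset.sum_congr rfl fun l _ => by ring

lemma QF_const {N : ℕ} (a : Fin N → ℝ) (c : ℝ) :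
    QF a (fun _ _ => c) = c * (∑ k, a k) ^ 2 := by
  simp only [QF]
  rw [sq, Finset.sum_mul_sum, Finset.mul_sum]
  refine Finset.sum_congr rfl fun k _ => ?_
  rw [Finset.mul_sum]
  exact Finset.sum_congr rfl fun l _ => by ring

lemma QF_setIntegral {N : ℕ} {S : Set ℝ} (hS : MeasurableSet S)
    (F : ℝ → Fin N → Fin N → ℝ) (a : Fin N → ℝ)
    (hint : ∀ k l, IntegrableOn (fun s => F s k l) S) :
    QF a (fun k l => ∫ s in S, F s k l) = ∫ s in S, QF a (F s) := by
  simp only [QF]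
  rw [integral_finset_sum _ (fun k _ => integrable_finset_sum _
    (fun l _ => ((hint k l).const_mul (a k * a l))))]
  refine Finset.sum_congr rfl fun k _ => ?_
  rw [integral_finset_sum _ (fun l _ => ((hint k l).const_mul (a k * a l)))]
  exact Finset.sum_congr rfl fun l _ => (integral_const_mul _ _).symm

/-! ### Geometric kernels -/

section Kernels

open scoped RealInnerProductSpace

variable {F : Type*} [NormedAddCommGroup F] [InnerProductSpace ℝ F] {N : ℕ}

lemma double_sum_left (a f : Fin N → ℝ) :
    ∑ k, ∑ l, a k * a l * f k = (∑ k, a k * f k) * ∑ l, a l := by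
  rw [Finset.sum_mul]
  refine Finset.sum_congr rfl fun k _ => ?_
  rw [Finset.mul_sum]
  exact Finset.sum_congr rfl fun l _ => by ring

lemma double_sum_right (a f : Fin N → ℝ) :
    ∑ k, ∑ l, a k * a l * f l = (∑ k, a k) * ∑ l, a l * f l := by
  rw [Finset.sum_mul]
  refine Finset.sum_congr rfl fun k _ => ?_
  rw [Finset.mul_sum]
  exact Finset.sum_congr rfl fun l _ => by ring

lemma double_sum_inner (a : Fin N → ℝ) (y : Fin N → F) :
    ∑ k, ∑ l, a k * a l * ⟪y k, y l⟫ = ‖∑ k, a k • y k‖ ^ 2 := by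
  rw [← real_inner_self_eq_norm_sq, sum_inner]
  refine Finset.sum_congr rfl fun k _ => ?_
  rw [inner_sum]
  refine Finset.sum_congr rfl fun l _ => ?_
  rw [real_inner_smul_left, real_inner_smul_right]
  ring

lemma isCND_sqdist (y : Fin N → F) {v : ℝ} (hv : 0 ≤ v) :
    IsCND (fun k l => v * ‖y k - y l‖ ^ 2) := by
  refine ⟨fun k l => by simp only []; rw [norm_sub_rev], fun a ha => ?_⟩
  have key : QF a (fun k l => v * ‖y k - y l‖ ^ 2)
      = v * (-2 * ‖∑ k, a k • y k‖ ^ 2) := by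
    rw [QF_const_mul]
    congr 1
    have expand : ∀ k l : Fin N, a k * a l * ‖y k - y l‖ ^ 2
        = a k * a l * ‖y k‖ ^ 2 + a k * a l * ‖y l‖ ^ 2
          - 2 * (a k * a l * ⟪y k, y l⟫) := by
      intro k l
      rw [norm_sub_sq_real]
      ring
    calc QF a (fun k l => ‖y k - y l‖ ^ 2)
        = (∑ k, ∑ l, a k * a l * ‖y k‖ ^ 2) + (∑ k, ∑ l, a k * a l * ‖y l‖ ^ 2)
          - 2 * ∑ k, ∑ l, a k * a l * ⟪y k, y l⟫ := by
          simp only [QF, expand, Finset.sum_add_distrib, Finset.sum_sub_distrib,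
            ← Finset.mul_sum]
      _ = -2 * ‖∑ k, a k • y k‖ ^ 2 := by
          rw [double_sum_left, double_sum_right, double_sum_inner, ha]
          ring
  rw [key]
  have : (0:ℝ) ≤ ‖∑ k, a k • y k‖ ^ 2 := sq_nonneg _
  nlinarith

lemma isPSD_gauss (y : Fin N → F) {v : ℝ} (hv : 0 ≤ v) :
    IsPSD (fun k l => Real.exp (-(v * ‖y k - y l‖ ^ 2))) :=
  (isCND_sqdist y hv).expNeg

lemma isCND_shift_rpow (y : Fin N → F) {γ u s : ℝ} (hγ0 : 0 < γ) (hγ1 : γ < 1)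
    (hu : 0 ≤ u) (hs : 0 ≤ s) :
    IsCND (fun k l => s * (u + ‖y k - y l‖ ^ 2) ^ γ) := by
  refine ⟨fun k l => by simp only []; rw [norm_sub_rev], fun a ha => ?_⟩
  rw [QF_const_mul]
  have hpt : ∀ k l : Fin N, (u + ‖y k - y l‖ ^ 2) ^ γ
      = (Ilevy γ)⁻¹ * ∫ w in Ioi 0,
          (1 - Real.exp (-(w * (u + ‖y k - y l‖ ^ 2)))) * w ^ (-1 - γ) := fun k l =>
    rpow_eq_levy_integral hγ0 hγ1 (by positivity)
  rw [QF_congr a hpt, QF_const_mul,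
    QF_setIntegral measurableSet_Ioi _ a
      (fun k l => integrableOn_levy hγ0 hγ1 (by positivity))]
  have hneg : ∫ w in Ioi 0, QF a (fun k l =>
      (1 - Real.exp (-(w * (u + ‖y k - y l‖ ^ 2)))) * w ^ (-1 - γ)) ≤ 0 := by
    refine setIntegral_nonpos measurableSet_Ioi fun w hw => ?_
    have hw0 : (0:ℝ) < w := hw
    have hpt2 : ∀ k l : Fin N, (1 - Real.exp (-(w * (u + ‖y k - y l‖ ^ 2)))) * w ^ (-1 - γ)
        = w ^ (-1 - γ) * (1 - Real.exp (-(w * u)) * Real.exp (-(w * ‖y k - y l‖ ^ 2))) := by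
      intro k l
      rw [← Real.exp_add]
      rw [show -(w * u) + -(w * ‖y k - y l‖ ^ 2) = -(w * (u + ‖y k - y l‖ ^ 2)) by ring]
      ring
    rw [QF_congr a hpt2, QF_const_mul,
      QF_sub a (fun _ _ => (1:ℝ)) (fun k l => Real.exp (-(w * u))
        * Real.exp (-(w * ‖y k - y l‖ ^ 2))), QF_const, ha]
    have hg : 0 ≤ QF a (fun k l => Real.exp (-(w * u))
        * Real.exp (-(w * ‖y k - y l‖ ^ 2))) := by
      rw [QF_const_mul]
      exact mul_nonneg (Real.exp_nonneg _) ((isPSD_gauss y hw0.le).2 a)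
    have hwp : (0:ℝ) ≤ w ^ (-1 - γ) := Real.rpow_nonneg hw0.le _
    nlinarith
  have hI : (0:ℝ) < (Ilevy γ)⁻¹ := inv_pos.mpr (Ilevy_pos hγ0 hγ1)
  have := mul_nonpos_iff.mpr (Or.inl ⟨hI.le, hneg⟩)
  exact mul_nonpos_iff.mpr (Or.inl ⟨hs, this⟩)

lemma isPSD_expNeg_shift_rpow (y : Fin N → F) {γ u s : ℝ} (hγ0 : 0 < γ) (hγ1 : γ < 1)
    (hu : 0 ≤ u) (hs : 0 ≤ s) :
    IsPSD (fun k l => Real.exp (-(s * (u + ‖y k - y l‖ ^ 2) ^ γ))) :=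
  (isCND_shift_rpow y hγ0 hγ1 hu hs).expNeg

lemma isPSD_shift_negpow (y : Fin N → F) {u q : ℝ} (hu : 0 < u) (hq : 0 < q) :
    IsPSD (fun k l => (u + ‖y k - y l‖ ^ 2) ^ (-q)) := by
  refine ⟨fun k l => by simp only []; rw [norm_sub_rev], fun a => ?_⟩
  have hc : ∀ k l : Fin N, (0:ℝ) < u + ‖y k - y l‖ ^ 2 := fun k l => by positivity
  have hpt : ∀ k l : Fin N, (u + ‖y k - y l‖ ^ 2) ^ (-q)
      = (Real.Gamma q)⁻¹ * ∫ σ in Ioi 0,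
          σ ^ (q - 1) * Real.exp (-((u + ‖y k - y l‖ ^ 2) * σ)) := by
    intro k l
    rw [integral_gammaKernel hq (hc k l)]
    rw [← mul_assoc, inv_mul_cancel₀ (Real.Gamma_pos_of_pos hq).ne', one_mul]
  rw [QF_congr a hpt, QF_const_mul,
    QF_setIntegral measurableSet_Ioi _ a
      (fun k l => integrableOn_gammaKernel hq (hc k l))]
  refine mul_nonneg (inv_nonneg.mpr (Real.Gamma_pos_of_pos hq).le) ?_
  refine setIntegral_nonneg measurableSet_Ioi fun σ hσ => ?_
  have hσ0 : (0:ℝ) < σ := hσ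
  have hpt2 : ∀ k l : Fin N, σ ^ (q - 1) * Real.exp (-((u + ‖y k - y l‖ ^ 2) * σ))
      = (σ ^ (q - 1) * Real.exp (-(σ * u))) * Real.exp (-(σ * ‖y k - y l‖ ^ 2)) := by
    intro k l
    rw [mul_assoc, ← Real.exp_add]
    rw [show -(σ * u) + -(σ * ‖y k - y l‖ ^ 2) = -((u + ‖y k - y l‖ ^ 2) * σ) by ring]
  rw [QF_congr a hpt2, QF_const_mul]
  exact mul_nonneg (mul_nonneg (Real.rpow_nonneg hσ0.le _) (Real.exp_nonneg _))
    ((isPSD_gauss y hσ0.le).2 a)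

end Kernels


/-! ### The FTC identity for `(1 + s m^γ) e^{-s m^γ}` -/

open Filter

section FTC

variable {γ s m : ℝ}

lemma contDeriv_aux (hγ0 : 0 < γ) (hs : 0 < s) (hm : 0 ≤ m) :
    (∀ u ∈ Ioi (0:ℝ), HasDerivAt
      (fun u : ℝ => -((1 + s * (u + m) ^ γ) * Real.exp (-(s * (u + m) ^ γ))))
      (s * s * γ * (u + m) ^ (2 * γ - 1) * Real.exp (-(s * (u + m) ^ γ))) u) := by
  intro u hu
  have hu0 : (0:ℝ) < u := hu
  have hum : (0:ℝ) < u + m := by linarith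
  have h1 : HasDerivAt (fun u : ℝ => u + m) 1 u := (hasDerivAt_id u).add_const m
  have h2 : HasDerivAt (fun x : ℝ => x ^ γ) (γ * (u + m) ^ (γ - 1)) (u + m) :=
    Real.hasDerivAt_rpow_const (Or.inl hum.ne')
  have hP : HasDerivAt (fun u : ℝ => (u + m) ^ γ) (γ * (u + m) ^ (γ - 1)) u := by
    have := h2.comp u h1
    rw [mul_one] at this
    exact this
  have hsP : HasDerivAt (fun u : ℝ => s * (u + m) ^ γ) (s * (γ * (u + m) ^ (γ - 1))) u :=
    hP.const_mul s
  have hexp : HasDerivAt (fun u : ℝ => Real.exp (-(s * (u + m) ^ γ)))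
      (Real.exp (-(s * (u + m) ^ γ)) * (-(s * (γ * (u + m) ^ (γ - 1))))) u :=
    hsP.neg.exp
  have hone : HasDerivAt (fun u : ℝ => 1 + s * (u + m) ^ γ)
      (s * (γ * (u + m) ^ (γ - 1))) u := hsP.const_add 1
  have hmul := (hone.mul hexp).neg
  refine hmul.congr_deriv ?_
  have hrw : (u + m) ^ (γ - 1) * (u + m) ^ γ = (u + m) ^ (2 * γ - 1) := by
    rw [← Real.rpow_add hum]
    ring_nf
  have hrw2 : (u + m) ^ (2 * γ - 1) = (u + m) ^ (γ - 1) * (u + m) ^ γ := hrw.symm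
  rw [hrw2]
  ring

lemma tendsto_aux (hγ0 : 0 < γ) (hs : 0 < s) (hm : 0 ≤ m) :
    Tendsto (fun u : ℝ => -((1 + s * (u + m) ^ γ) * Real.exp (-(s * (u + m) ^ γ))))
      atTop (nhds 0) := by
  have hP : Tendsto (fun u : ℝ => s * (u + m) ^ γ) atTop atTop := by
    refine Tendsto.const_mul_atTop hs ?_
    exact (tendsto_rpow_atTop hγ0).comp (tendsto_atTop_add_const_right atTop m tendsto_id)
  have hbase : Tendsto (fun p : ℝ => (1 + p) * Real.exp (-p)) atTop (nhds 0) := by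
    have h1 : Tendsto (fun p : ℝ => Real.exp (-p)) atTop (nhds 0) :=
      tendsto_exp_neg_atTop_nhds_zero
    have h2 : Tendsto (fun p : ℝ => p * Real.exp (-p)) atTop (nhds 0) := by
      simpa using tendsto_pow_mul_exp_neg_atTop_nhds_zero 1
    have := h1.add h2
    simpa [add_mul, one_mul] using this
  have := (hbase.comp hP).neg
  simpa using this

lemma cont_aux (hγ0 : 0 < γ) :
    Continuous (fun u : ℝ => -((1 + s * (u + m) ^ γ) * Real.exp (-(s * (u + m) ^ γ)))) := by
  have hrp : Continuous (fun u : ℝ => (u + m) ^ γ) := by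
    rw [continuous_iff_continuousAt]
    intro u
    exact (Real.continuousAt_rpow_const _ _ (Or.inr hγ0.le)).comp
      ((continuous_id.add continuous_const).continuousAt)
  continuity

lemma deriv_nonneg_aux (hγ0 : 0 < γ) (hs : 0 < s) (hm : 0 ≤ m) :
    ∀ u ∈ Ioi (0:ℝ), 0 ≤ s * s * γ * (u + m) ^ (2 * γ - 1)
      * Real.exp (-(s * (u + m) ^ γ)) := by
  intro u hu
  have hu0 : (0:ℝ) < u := hu
  have hum : (0:ℝ) < u + m := by linarith
  have h1 := Real.rpow_nonneg hum.le (2 * γ - 1)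
  have h2 := Real.exp_nonneg (-(s * (u + m) ^ γ))
  have : (0:ℝ) ≤ s * s * γ := by positivity
  exact mul_nonneg (mul_nonneg this h1) h2

lemma onePlus_integrableOn (hγ0 : 0 < γ) (hs : 0 < s) (hm : 0 ≤ m) :
    IntegrableOn (fun u : ℝ => s * s * γ * (u + m) ^ (2 * γ - 1)
      * Real.exp (-(s * (u + m) ^ γ))) (Ioi 0) :=
  integrableOn_Ioi_deriv_of_nonneg ((cont_aux hγ0).continuousWithinAt)
    (contDeriv_aux hγ0 hs hm) (deriv_nonneg_aux hγ0 hs hm) (tendsto_aux hγ0 hs hm)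

lemma onePlus_integral (hγ0 : 0 < γ) (hs : 0 < s) (hm : 0 ≤ m) :
    ∫ u in Ioi 0, s * s * γ * (u + m) ^ (2 * γ - 1) * Real.exp (-(s * (u + m) ^ γ))
      = (1 + s * m ^ γ) * Real.exp (-(s * m ^ γ)) := by
  rw [integral_Ioi_of_hasDerivAt_of_nonneg ((cont_aux hγ0).continuousWithinAt)
    (contDeriv_aux hγ0 hs hm) (deriv_nonneg_aux hγ0 hs hm) (tendsto_aux hγ0 hs hm)]
  simp

end FTC


/-! ### The Gamma mixture identity -/

lemma gammaMix {δ lam T : ℝ} (hδ0 : 0 < δ) (hlam : 0 < lam) (hT : 0 ≤ T) (ε : ℝ) :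
    ε * (1 + T) ^ (-(lam/δ)) + lam * T * (1 + T) ^ (-(lam/δ) - 1)
      = (Real.Gamma (lam/δ))⁻¹ * ∫ s in Ioi 0,
        (ε * s ^ (lam/δ - 1) + δ * T * s ^ (lam/δ)) * Real.exp (-((1 + T) * s)) := by
  set α := lam/δ with hαdef
  have hα : 0 < α := div_pos hlam hδ0
  have hα1 : (0:ℝ) < α + 1 := by linarith
  have h1T : (0:ℝ) < 1 + T := by linarith
  have hg : Real.Gamma α ≠ 0 := (Real.Gamma_pos_of_pos hα).ne'
  have hda : δ * α = lam := by
    rw [hαdef]; field_simp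
  have hsplit : ∫ s in Ioi 0, (ε * s ^ (α - 1) + δ * T * s ^ α) * Real.exp (-((1 + T) * s))
      = ε * (∫ s in Ioi 0, s ^ (α - 1) * Real.exp (-((1 + T) * s)))
        + (δ * T) * (∫ s in Ioi 0, s ^ ((α + 1) - 1) * Real.exp (-((1 + T) * s))) := by
    rw [← integral_const_mul, ← integral_const_mul,
      ← integral_add ((integrableOn_gammaKernel hα h1T).const_mul ε)
        ((integrableOn_gammaKernel hα1 h1T).const_mul (δ * T))]
    refine setIntegral_congr_fun measurableSet_Ioi (fun s hs => ?_)
    try simp only [Pi.add_apply]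
    rw [show (α + 1) - 1 = α from by ring]
    ring
  rw [hsplit, integral_gammaKernel hα h1T, integral_gammaKernel hα1 h1T,
    Real.Gamma_add_one hα.ne']
  have hexp : (1 + T) ^ (-(α + 1)) = (1 + T) ^ (-α - 1) := by
    rw [show -(α+1) = -α - 1 from by ring]
  rw [hexp]
  have expand : (Real.Gamma α)⁻¹ * (ε * (Real.Gamma α * (1 + T) ^ (-α))
      + δ * T * (α * Real.Gamma α * (1 + T) ^ (-α - 1)))
      = ((Real.Gamma α)⁻¹ * Real.Gamma α) * (ε * (1 + T) ^ (-α))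
        + ((Real.Gamma α)⁻¹ * Real.Gamma α) * ((δ * α) * (T * (1 + T) ^ (-α - 1))) := by
    ring
  rw [expand, inv_mul_cancel₀ hg, hda]
  ring

/-! ### Positivity of the ψ quadratic form -/

section Psi

open scoped RealInnerProductSpace

variable {F : Type*} [NormedAddCommGroup F] [InnerProductSpace ℝ F] {N : ℕ}

lemma norm_rpow_eq (δ : ℝ) (z : F) : (‖z‖ ^ 2 : ℝ) ^ (δ/2) = ‖z‖ ^ δ := by
  rw [← Real.rpow_natCast ‖z‖ 2, ← Real.rpow_mul (norm_nonneg z)]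
  norm_num
  rw [show (2:ℝ) * (δ/2) = δ from by ring]

lemma psi_qf_nonneg {δ lam ε : ℝ} (hδ0 : 0 < δ) (hδ1 : δ < 1) (hlam : 0 < lam)
    (hε : δ ≤ ε) (y : Fin N → F) (a : Fin N → ℝ) :
    0 ≤ QF a (fun k l => ε * (1 + ‖y k - y l‖ ^ δ) ^ (-(lam/δ))
      + lam * ‖y k - y l‖ ^ δ * (1 + ‖y k - y l‖ ^ δ) ^ (-(lam/δ) - 1)) := by
  set α := lam/δ with hαdef
  have hα : 0 < α := div_pos hlam hδ0
  have hγ0 : (0:ℝ) < δ/2 := by linarith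
  have hγ1 : δ/2 < 1 := by linarith
  set T : Fin N → Fin N → ℝ := fun k l => ‖y k - y l‖ ^ δ with hTdef
  have hTev : ∀ k l : Fin N, T k l = ‖y k - y l‖ ^ δ := fun k l => rfl
  have hT : ∀ k l, 0 ≤ T k l := fun k l => Real.rpow_nonneg (norm_nonneg _) _
  have h1T : ∀ k l, (0:ℝ) < 1 + T k l := fun k l => by linarith [hT k l]
  -- rewrite via Gamma mixture
  have key1 : ∀ k l : Fin N, ε * (1 + T k l) ^ (-α) + lam * T k l * (1 + T k l) ^ (-α - 1)
      = (Real.Gamma α)⁻¹ * ∫ s in Ioi 0,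
        (ε * s ^ (α - 1) + δ * T k l * s ^ α) * Real.exp (-((1 + T k l) * s)) :=
    fun k l => gammaMix hδ0 hlam (hT k l) ε
  have hint : ∀ k l : Fin N, IntegrableOn
      (fun s : ℝ => (ε * s ^ (α - 1) + δ * T k l * s ^ α) * Real.exp (-((1 + T k l) * s)))
      (Ioi 0) := by
    intro k l
    have h1 : IntegrableOn (fun s : ℝ => ε * (s ^ (α-1) * Real.exp (-((1 + T k l) * s))))
        (Ioi 0) := (integrableOn_gammaKernel hα (h1T k l)).const_mul ε
    have h2 : IntegrableOn (fun s : ℝ =>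
        (δ * T k l) * (s ^ α * Real.exp (-((1 + T k l) * s)))) (Ioi 0) := by
      have h2' := (integrableOn_gammaKernel (show (0:ℝ) < α + 1 by linarith)
        (h1T k l)).const_mul (δ * T k l)
      have hee : α + 1 - 1 = α := by ring
      rwa [hee] at h2'
    refine IntegrableOn.congr_fun (h1.add h2) (fun s hs => ?_) measurableSet_Ioi
    simp only [Pi.add_apply]
    ring
  rw [QF_congr a key1, QF_const_mul,
    QF_setIntegral measurableSet_Ioi _ a hint]
  refine mul_nonneg (inv_nonneg.mpr (Real.Gamma_pos_of_pos hα).le) ?_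
  refine setIntegral_nonneg measurableSet_Ioi fun s hs => ?_
  have hs0 : (0:ℝ) < s := hs
  -- pointwise factorization
  have key2 : ∀ k l : Fin N,
      (ε * s ^ (α - 1) + δ * T k l * s ^ α) * Real.exp (-((1 + T k l) * s))
      = (s ^ (α - 1) * Real.exp (-s)) *
          ((ε - δ) * Real.exp (-(s * T k l))
            + δ * ((1 + s * T k l) * Real.exp (-(s * T k l)))) := by
    intro k l
    have hsα : s ^ α = s ^ (α - 1) * s := by
      rw [← Real.rpow_add_one hs0.ne' (α - 1)]
      rw [show α - 1 + 1 = α from by ring]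
    have hee : Real.exp (-((1 + T k l) * s)) = Real.exp (-s) * Real.exp (-(s * T k l)) := by
      rw [← Real.exp_add]
      rw [show -s + -(s * T k l) = -((1 + T k l) * s) from by ring]
    rw [hsα, hee]
    ring
  rw [QF_congr a key2, QF_const_mul]
  refine mul_nonneg (mul_nonneg (Real.rpow_nonneg hs0.le _) (Real.exp_nonneg _)) ?_
  rw [QF_add a (fun k l => (ε - δ) * Real.exp (-(s * T k l)))
    (fun k l => δ * ((1 + s * T k l) * Real.exp (-(s * T k l)))), QF_const_mul, QF_const_mul]
  have hE1 : 0 ≤ QF a (fun k l => Real.exp (-(s * T k l))) := by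
    have hpsd := isPSD_expNeg_shift_rpow (γ := δ/2) (u := 0) (s := s) y hγ0 hγ1 le_rfl hs0.le
    refine (hpsd.of_eq (fun k l => ?_)).2 a
    rw [hTev k l, zero_add, norm_rpow_eq δ (y k - y l)]
  have hE2 : 0 ≤ QF a (fun k l => (1 + s * T k l) * Real.exp (-(s * T k l))) := by
    have key3 : ∀ k l : Fin N, (1 + s * T k l) * Real.exp (-(s * T k l))
        = ∫ u in Ioi 0, s * s * (δ/2) * (u + ‖y k - y l‖ ^ 2) ^ (2 * (δ/2) - 1)
            * Real.exp (-(s * (u + ‖y k - y l‖ ^ 2) ^ (δ/2))) := by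
      intro k l
      rw [onePlus_integral hγ0 hs0 (sq_nonneg ‖y k - y l‖), hTev k l,
        norm_rpow_eq δ (y k - y l)]
    rw [QF_congr a key3,
      QF_setIntegral measurableSet_Ioi _ a
        (fun k l => onePlus_integrableOn hγ0 hs0 (sq_nonneg ‖y k - y l‖))]
    refine setIntegral_nonneg measurableSet_Ioi fun u hu => ?_
    have hu0 : (0:ℝ) < u := hu
    have hq : (0:ℝ) < 1 - δ := by linarith
    have hpsd1 := isPSD_shift_negpow (u := u) (q := 1 - δ) y hu0 hq
    have hpsd2 := isPSD_expNeg_shift_rpow (γ := δ/2) (u := u) (s := s) y hγ0 hγ1 hu0.le hs0.le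
    have hpsd := (hpsd1.schur hpsd2).smul (c := s * s * (δ/2)) (by positivity)
    refine (hpsd.of_eq (fun k l => ?_)).2 a
    rw [show 2 * (δ/2) - 1 = -(1 - δ) from by ring]
    ring
  have hεδ : (0:ℝ) ≤ ε - δ := by linarith
  have hδ' : (0:ℝ) ≤ δ := hδ0.le
  exact add_nonneg (mul_nonneg hεδ hE1) (mul_nonneg hδ' hE2)

end Psi


/-! ### Derivative in the scale parameter -/

lemma hasDerivAt_G {δ lam ε t : ℝ} (hδ0 : 0 < δ) (hlam : 0 < lam) (ht : 0 ≤ t)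
    {β : ℝ} (hβ : 0 < β) :
    HasDerivAt (fun b : ℝ => b ^ ε * (1 + t ^ δ * (b ^ δ)⁻¹) ^ (-(lam/δ)))
      (β ^ (ε - 1) * (ε * (1 + (t/β) ^ δ) ^ (-(lam/δ))
        + lam * (t/β) ^ δ * (1 + (t/β) ^ δ) ^ (-(lam/δ) - 1))) β := by
  set α := lam/δ with hαdef
  have hda : δ * α = lam := by rw [hαdef]; field_simp
  have hβδ : (0:ℝ) < β ^ δ := Real.rpow_pos_of_pos hβ δ
  have htδ : (0:ℝ) ≤ t ^ δ := Real.rpow_nonneg ht δ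
  have hX : (0:ℝ) < 1 + t ^ δ * (β ^ δ)⁻¹ := by
    have : (0:ℝ) ≤ t ^ δ * (β ^ δ)⁻¹ := mul_nonneg htδ (inv_nonneg.mpr hβδ.le)
    linarith
  have hb1 : HasDerivAt (fun b : ℝ => b ^ ε) (ε * β ^ (ε - 1)) β :=
    Real.hasDerivAt_rpow_const (Or.inl hβ.ne')
  have hb2 : HasDerivAt (fun b : ℝ => b ^ δ) (δ * β ^ (δ - 1)) β :=
    Real.hasDerivAt_rpow_const (Or.inl hβ.ne')
  have hb3 : HasDerivAt (fun b : ℝ => (b ^ δ)⁻¹)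
      (-(δ * β ^ (δ - 1)) / (β ^ δ) ^ 2) β := hb2.inv hβδ.ne'
  have hb4 : HasDerivAt (fun b : ℝ => t ^ δ * (b ^ δ)⁻¹)
      (t ^ δ * (-(δ * β ^ (δ - 1)) / (β ^ δ) ^ 2)) β := hb3.const_mul _
  have hb5 : HasDerivAt (fun b : ℝ => 1 + t ^ δ * (b ^ δ)⁻¹)
      (t ^ δ * (-(δ * β ^ (δ - 1)) / (β ^ δ) ^ 2)) β := hb4.const_add 1
  have hb6 : HasDerivAt (fun b : ℝ => (1 + t ^ δ * (b ^ δ)⁻¹) ^ (-α))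
      ((t ^ δ * (-(δ * β ^ (δ - 1)) / (β ^ δ) ^ 2)) * (-α)
        * (1 + t ^ δ * (β ^ δ)⁻¹) ^ (-α - 1)) β :=
    hb5.rpow_const (Or.inl hX.ne')
  have htotal := hb1.mul hb6
  refine htotal.congr_deriv ?_
  have hdiv : (t/β) ^ δ = t ^ δ * (β ^ δ)⁻¹ := by
    rw [Real.div_rpow ht hβ.le, div_eq_mul_inv]
  rw [hdiv]
  have e1 : β ^ ε = β ^ (ε - 1) * β := by
    rw [← Real.rpow_add_one hβ.ne' (ε - 1)]
    ring_nf
  have e2 : β ^ (δ - 1) = β ^ δ * β⁻¹ := by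
    rw [← Real.rpow_neg_one β, ← Real.rpow_add hβ]
    congr 1
    try ring
  rw [e1, e2, ← hda]
  field_simp


/-! ### Continuity of the scale integrand -/

lemma continuousAt_psiInt {δ lam ε t : ℝ} (hδ0 : 0 < δ) (ht : 0 ≤ t) {β : ℝ} (hβ : 0 < β) :
    ContinuousAt (fun b : ℝ => b ^ (ε - 1) * (ε * (1 + (t/b) ^ δ) ^ (-(lam/δ))
      + lam * (t/b) ^ δ * (1 + (t/b) ^ δ) ^ (-(lam/δ) - 1))) β := by
  have c1 : ContinuousAt (fun b : ℝ => b ^ (ε - 1)) β :=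
    Real.continuousAt_rpow_const _ _ (Or.inl hβ.ne')
  have c2 : ContinuousAt (fun b : ℝ => t / b) β :=
    continuousAt_const.div continuousAt_id hβ.ne'
  have c4 : ContinuousAt (fun b : ℝ => (t/b) ^ δ) β :=
    c2.rpow_const (Or.inr hδ0.le)
  have c5 : ContinuousAt (fun b : ℝ => 1 + (t/b) ^ δ) β := continuousAt_const.add c4
  have hbase : (0:ℝ) < 1 + (t/β) ^ δ := by
    have : (0:ℝ) ≤ (t/β) ^ δ := Real.rpow_nonneg (div_nonneg ht hβ.le) δ
    linarith
  have c6 : ContinuousAt (fun b : ℝ => (1 + (t/b) ^ δ) ^ (-(lam/δ))) β :=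
    c5.rpow_const (Or.inl hbase.ne')
  have c7 : ContinuousAt (fun b : ℝ => (1 + (t/b) ^ δ) ^ (-(lam/δ) - 1)) β :=
    c5.rpow_const (Or.inl hbase.ne')
  exact c1.mul ((continuousAt_const.mul c6).add ((continuousAt_const.mul c4).mul c7))

/-! ### Interval-integral interchange for quadratic forms -/

lemma QF_intervalIntegral {N : ℕ} {b1 b2 : ℝ} (F : ℝ → Fin N → Fin N → ℝ) (a : Fin N → ℝ)
    (hint : ∀ k l, IntervalIntegrable (fun s => F s k l) volume b1 b2) :
    QF a (fun k l => ∫ s in b1..b2, F s k l) = ∫ s in b1..b2, QF a (F s) := by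
  have hsum : ∀ k : Fin N, IntervalIntegrable
      (fun s => ∑ h, a k * a h * F s k h) volume b1 b2 := by
    intro k
    have h2 := IntervalIntegrable.sum (μ := volume) (a := b1) (b := b2) Finset.univ
      (fun l (_ : l ∈ Finset.univ) => (hint k l).const_mul (a k * a l))
    rwa [Finset.sum_fn] at h2
  simp only [QF]
  rw [show (∫ s in b1..b2, ∑ k, ∑ h, a k * a h * F s k h)
      = ∑ k, ∫ s in b1..b2, ∑ h, a k * a h * F s k h from
    intervalIntegral.integral_finset_sum (fun k _ => hsum k)]
  refine Finset.sum_congr rfl fun k _ => ?_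
  rw [show (∫ s in b1..b2, ∑ h, a k * a h * F s k h)
      = ∑ h, ∫ s in b1..b2, a k * a h * F s k h from
    intervalIntegral.integral_finset_sum (fun l _ => (hint k l).const_mul (a k * a l))]
  exact Finset.sum_congr rfl fun l _ => (intervalIntegral.integral_const_mul _ _).symm

end ZOP

/-- Theorem 3.3(1): for `0 < δ < 1` and `ε ≥ δ`, the Zastavnyi operator applied
to the Generalized Cauchy function belongs to `Φ_∞`. -/
theorem genCauchy_zastavnyi_pos (δ lam ε β₁ β₂ : ℝ) (hδ0 : 0 < δ) (hδ1 : δ < 1)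
    (hlam : 0 < lam) (hβ₁ : 0 < β₁) (hβ : β₁ < β₂) (hε0 : 0 < ε) (hε : δ ≤ ε) :
    ∀ d : ℕ, 0 < d → MemPhi d (zastavnyi ε β₁ β₂ (genCauchy δ lam)) := by
  intro d hd
  have hβ₂ : (0:ℝ) < β₂ := lt_trans hβ₁ hβ
  have hden : (0:ℝ) < β₂ ^ ε - β₁ ^ ε := sub_pos.mpr (Real.rpow_lt_rpow hβ₁.le hβ hε0)
  have hα : (0:ℝ) < lam / δ := div_pos hlam hδ0
  have hgc : ∀ b : ℝ, 0 < b → ∀ τ : ℝ, 0 ≤ τ →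
      genCauchy δ lam (τ / b) = (1 + τ ^ δ * (b ^ δ)⁻¹) ^ (-(lam/δ)) := by
    intro b hb τ hτ
    rw [genCauchy, Real.div_rpow hτ hb.le, div_eq_mul_inv]
  refine ⟨?_, ?_, ?_⟩
  · -- continuity on [0, ∞)
    intro τ hτ
    have hτ0 : (0:ℝ) ≤ τ := hτ
    apply ContinuousAt.continuousWithinAt
    have hC : ∀ b : ℝ, 0 < b → ContinuousAt (fun τ' : ℝ => genCauchy δ lam (τ' / b)) τ := by
      intro b hb
      simp only [genCauchy]
      have c2 : ContinuousAt (fun τ' : ℝ => τ' / b) τ := continuousAt_id.div_const b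
      have c4 : ContinuousAt (fun τ' : ℝ => (τ' / b) ^ δ) τ :=
        c2.rpow_const (Or.inr hδ0.le)
      have c5 : ContinuousAt (fun τ' : ℝ => 1 + (τ' / b) ^ δ) τ := continuousAt_const.add c4
      have hbase : (0:ℝ) < 1 + (τ/b) ^ δ := by
        have : (0:ℝ) ≤ (τ/b) ^ δ := Real.rpow_nonneg (div_nonneg hτ0 hb.le) δ
        linarith
      exact c5.rpow_const (Or.inl hbase.ne')
    show ContinuousAt (fun τ' => (β₂ ^ ε * genCauchy δ lam (τ' / β₂)
      - β₁ ^ ε * genCauchy δ lam (τ' / β₁)) / (β₂ ^ ε - β₁ ^ ε)) τ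
    exact ((continuousAt_const.mul (hC β₂ hβ₂)).sub
      (continuousAt_const.mul (hC β₁ hβ₁))).div_const _
  · -- value 1 at 0
    show (β₂ ^ ε * genCauchy δ lam (0 / β₂) - β₁ ^ ε * genCauchy δ lam (0 / β₁))
      / (β₂ ^ ε - β₁ ^ ε) = 1
    rw [zero_div, zero_div]
    have : genCauchy δ lam 0 = 1 := by
      rw [genCauchy, Real.zero_rpow hδ0.ne', add_zero, Real.one_rpow]
    rw [this, mul_one, mul_one, div_self hden.ne']
  · -- positive definiteness
    intro N x a
    show (0:ℝ) ≤ ZOP.QF a (fun k l => zastavnyi ε β₁ β₂ (genCauchy δ lam) ‖x k - x l‖)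
    have ht0 : ∀ k l : Fin N, (0:ℝ) ≤ ‖x k - x l‖ := fun k l => norm_nonneg _
    -- the scale-space integrand
    set ψint : ℝ → Fin N → Fin N → ℝ := fun b k l =>
      b ^ (ε - 1) * (ε * (1 + (‖x k - x l‖ / b) ^ δ) ^ (-(lam/δ))
        + lam * (‖x k - x l‖ / b) ^ δ * (1 + (‖x k - x l‖ / b) ^ δ) ^ (-(lam/δ) - 1))
      with hψdef
    have hmem : ∀ b ∈ Set.uIcc β₁ β₂, (0:ℝ) < b := by
      intro b hb
      rw [Set.uIcc_of_le hβ.le] at hb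
      exact lt_of_lt_of_le hβ₁ hb.1
    have hcont : ∀ k l : Fin N, ContinuousOn (fun b => ψint b k l) (Set.uIcc β₁ β₂) :=
      fun k l b hb => (ZOP.continuousAt_psiInt hδ0 (ht0 k l) (hmem b hb)).continuousWithinAt
    have hII : ∀ k l : Fin N, IntervalIntegrable (fun b => ψint b k l) volume β₁ β₂ :=
      fun k l => (hcont k l).intervalIntegrable
    have key : ∀ k l : Fin N, zastavnyi ε β₁ β₂ (genCauchy δ lam) ‖x k - x l‖
        = (β₂ ^ ε - β₁ ^ ε)⁻¹ * ∫ b in β₁..β₂, ψint b k l := by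
      intro k l
      have hftc : ∫ b in β₁..β₂, ψint b k l
          = β₂ ^ ε * (1 + ‖x k - x l‖ ^ δ * (β₂ ^ δ)⁻¹) ^ (-(lam/δ))
            - β₁ ^ ε * (1 + ‖x k - x l‖ ^ δ * (β₁ ^ δ)⁻¹) ^ (-(lam/δ)) := by
        exact intervalIntegral.integral_eq_sub_of_hasDerivAt
          (fun b hb => ZOP.hasDerivAt_G hδ0 hlam (ht0 k l) (hmem b hb)) (hII k l)
      rw [hftc]
      show (β₂ ^ ε * genCauchy δ lam (‖x k - x l‖ / β₂)
        - β₁ ^ ε * genCauchy δ lam (‖x k - x l‖ / β₁)) / (β₂ ^ ε - β₁ ^ ε) = _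
      rw [hgc β₂ hβ₂ _ (ht0 k l), hgc β₁ hβ₁ _ (ht0 k l), div_eq_inv_mul]
    rw [ZOP.QF_congr a key, ZOP.QF_const_mul, ZOP.QF_intervalIntegral ψint a hII]
    refine mul_nonneg (inv_nonneg.mpr hden.le)
      (intervalIntegral.integral_nonneg hβ.le fun b hb => ?_)
    have hb0 : (0:ℝ) < b := lt_of_lt_of_le hβ₁ hb.1
    have key2 : ∀ k l : Fin N, ψint b k l
        = b ^ (ε - 1) * (ε * (1 + ‖b⁻¹ • x k - b⁻¹ • x l‖ ^ δ) ^ (-(lam/δ))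
          + lam * ‖b⁻¹ • x k - b⁻¹ • x l‖ ^ δ
            * (1 + ‖b⁻¹ • x k - b⁻¹ • x l‖ ^ δ) ^ (-(lam/δ) - 1)) := by
      intro k l
      have hnorm : ‖b⁻¹ • x k - b⁻¹ • x l‖ = ‖x k - x l‖ / b := by
        rw [← smul_sub, norm_smul, Real.norm_eq_abs, abs_of_pos (inv_pos.mpr hb0),
          inv_mul_eq_div]
      rw [hψdef]
      simp only []
      rw [hnorm]
    rw [ZOP.QF_congr a key2, ZOP.QF_const_mul]
    exact mul_nonneg (Real.rpow_nonneg hb0.le _)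
      (ZOP.psi_qf_nonneg hδ0 hδ1 hlam hε (fun k => b⁻¹ • x k) a)
end
end

section
/- Let ν ∈ ℝ and let K_ν be the modified Bessel function of the second kind of order ν. Then z K_ν′(z)/K_ν(z) tends to −∞ as z → +∞, where K_ν′ denotes the derivative of K_ν. -/
open MeasureTheory Real Filter

noncomputable section

private lemma cosh_quad_le {u : ℝ} (hu : 0 ≤ u) : 1/2 + u^2/8 ≤ Real.cosh u := by
  have h := Real.add_one_le_exp (u/2)
  have he : Real.exp u = Real.exp (u/2) * Real.exp (u/2) := by
    rw [← Real.exp_add]; ring_nf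
  rw [Real.cosh_eq]
  nlinarith [Real.exp_pos (-u), Real.exp_pos (u/2)]

private lemma cosh_le_exp {u : ℝ} (hu : 0 ≤ u) : Real.cosh u ≤ Real.exp u := by
  rw [Real.cosh_eq]
  have : Real.exp (-u) ≤ Real.exp u := Real.exp_le_exp.2 (by linarith)
  linarith

private lemma cosh_mul_le_exp (ν : ℝ) {u : ℝ} (hu : 0 ≤ u) :
    Real.cosh (ν * u) ≤ Real.exp (|ν| * u) := by
  rw [← Real.cosh_abs, abs_mul, abs_of_nonneg hu]
  exact cosh_le_exp (by positivity)

private lemma key_integrable (a b : ℝ) (ha : 0 < a) :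
    IntegrableOn (fun u => Real.exp (b * u - a * Real.cosh u)) (Set.Ioi 0) := by
  have hg : Integrable (fun u : ℝ =>
      Real.exp (-a/2 + 2*b^2/a) * Real.exp (-(a/8) * (u - 4*b/a)^2)) := by
    exact ((integrable_exp_neg_mul_sq (by positivity : (0:ℝ) < a/8)).comp_sub_right
      (4*b/a)).const_mul _
  refine (hg.integrableOn).mono' ?_ ?_
  · exact (Real.continuous_exp.comp (by continuity)).aestronglyMeasurable
  · filter_upwards [ae_restrict_mem measurableSet_Ioi] with u hu
    have hu' : (0:ℝ) ≤ u := le_of_lt hu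
    have hc := cosh_quad_le hu'
    rw [Real.norm_eq_abs, abs_of_nonneg (Real.exp_pos _).le, ← Real.exp_add]
    apply Real.exp_le_exp.2
    have hane : a ≠ 0 := ne_of_gt ha
    have : -a/2 + 2*b^2/a + -(a/8) * (u - 4*b/a)^2 = b*u - a*(1/2 + u^2/8) := by
      field_simp; ring
    rw [this]
    nlinarith

private lemma besselK_integrand_integrable (ν t : ℝ) (ht : 0 < t) :
    IntegrableOn (fun u => Real.exp (-t * Real.cosh u) * Real.cosh (ν * u)) (Set.Ioi 0) := by
  refine ((key_integrable t |ν| ht).mono' ?_ ?_)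
  · exact ((Real.continuous_exp.comp (by continuity)).mul
      (Real.continuous_cosh.comp (by continuity))).aestronglyMeasurable
  · filter_upwards [ae_restrict_mem measurableSet_Ioi] with u hu
    have hu' : (0:ℝ) ≤ u := le_of_lt hu
    have h1 := cosh_mul_le_exp ν hu'
    have h2 : (0:ℝ) < Real.cosh (ν*u) := Real.cosh_pos _
    rw [Real.norm_eq_abs, abs_of_nonneg (by positivity)]
    calc Real.exp (-t * Real.cosh u) * Real.cosh (ν*u)
        ≤ Real.exp (-t * Real.cosh u) * Real.exp (|ν| * u) := by
          exact mul_le_mul_of_nonneg_left h1 (Real.exp_pos _).le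
      _ = Real.exp (|ν| * u - t * Real.cosh u) := by rw [← Real.exp_add]; ring_nf

private lemma besselK_deriv_integrand_integrable (ν t : ℝ) (ht : 0 < t) :
    IntegrableOn (fun u => Real.cosh u * (Real.exp (-t * Real.cosh u) * Real.cosh (ν * u)))
      (Set.Ioi 0) := by
  refine ((key_integrable t (1+|ν|) ht).mono' ?_ ?_)
  · exact (Real.continuous_cosh.mul ((Real.continuous_exp.comp (by continuity)).mul
      (Real.continuous_cosh.comp (by continuity)))).aestronglyMeasurable
  · filter_upwards [ae_restrict_mem measurableSet_Ioi] with u hu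
    have hu' : (0:ℝ) ≤ u := le_of_lt hu
    have h1 := cosh_mul_le_exp ν hu'
    have h0 := cosh_le_exp hu'
    have h2 : (0:ℝ) < Real.cosh (ν*u) := Real.cosh_pos _
    have h3 : (0:ℝ) < Real.cosh u := Real.cosh_pos _
    rw [Real.norm_eq_abs, abs_of_nonneg (by positivity)]
    calc Real.cosh u * (Real.exp (-t * Real.cosh u) * Real.cosh (ν*u))
        ≤ Real.exp u * (Real.exp (-t * Real.cosh u) * Real.exp (|ν| * u)) := by
          apply mul_le_mul h0 (mul_le_mul_of_nonneg_left h1 (Real.exp_pos _).le)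
            (by positivity) (Real.exp_pos _).le
      _ = Real.exp ((1+|ν|) * u - t * Real.cosh u) := by
          rw [← Real.exp_add, ← Real.exp_add]; ring_nf

private lemma besselK_pos (ν : ℝ) {t : ℝ} (ht : 0 < t) : 0 < besselK ν t := by
  rw [besselK, setIntegral_pos_iff_support_of_nonneg_ae]
  · rw [show (Function.support fun u => Real.exp (-t * Real.cosh u) * Real.cosh (ν * u)) =
        Set.univ from ?_]
    · simpa using measure_Ioi_pos (volume : Measure ℝ) 0
    · ext u; simp [Function.mem_support]
      positivity
  · filter_upwards with u
    positivity
  · exact besselK_integrand_integrable ν t ht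

private lemma besselK_hasDerivAt (ν : ℝ) {z : ℝ} (hz : 0 < z) :
    HasDerivAt (besselK ν)
      (∫ u in Set.Ioi (0:ℝ),
        -(Real.cosh u * (Real.exp (-z * Real.cosh u) * Real.cosh (ν * u)))) z := by
  have := hasDerivAt_integral_of_dominated_loc_of_deriv_le (μ := volume.restrict (Set.Ioi 0))
    (F := fun t u => Real.exp (-t * Real.cosh u) * Real.cosh (ν * u))
    (F' := fun t u => -(Real.cosh u * (Real.exp (-t * Real.cosh u) * Real.cosh (ν * u))))
    (x₀ := z) (bound := fun u => Real.exp ((1+|ν|) * u - (z/2) * Real.cosh u))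
    (Metric.ball_mem_nhds z (half_pos hz)) ?_ (besselK_integrand_integrable ν z hz) ?_ ?_
    (key_integrable (z/2) (1+|ν|) (half_pos hz)) ?_
  · exact this.2
  · filter_upwards with t
    exact ((Real.continuous_exp.comp (by continuity)).mul
      (Real.continuous_cosh.comp (by continuity))).aestronglyMeasurable
  · exact ((Real.continuous_cosh.mul ((Real.continuous_exp.comp (by continuity)).mul
      (Real.continuous_cosh.comp (by continuity)))).neg).aestronglyMeasurable
  · filter_upwards [ae_restrict_mem measurableSet_Ioi] with u hu t htb
    have hu' : (0:ℝ) ≤ u := le_of_lt hu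
    have ht2 : z/2 ≤ t := by
      rw [Metric.mem_ball, Real.dist_eq, abs_lt] at htb; linarith
    have h1 := cosh_mul_le_exp ν hu'
    have h0 := cosh_le_exp hu'
    have h2 : (0:ℝ) < Real.cosh (ν*u) := Real.cosh_pos _
    have h3 : (0:ℝ) < Real.cosh u := Real.cosh_pos _
    rw [norm_neg, Real.norm_eq_abs, abs_of_nonneg (by positivity)]
    have hexp : Real.exp (-t * Real.cosh u) ≤ Real.exp (-(z/2) * Real.cosh u) :=
      Real.exp_le_exp.2 (by nlinarith)
    calc Real.cosh u * (Real.exp (-t * Real.cosh u) * Real.cosh (ν*u))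
        ≤ Real.exp u * (Real.exp (-(z/2) * Real.cosh u) * Real.exp (|ν| * u)) := by
          apply mul_le_mul h0 (mul_le_mul hexp h1 h2.le (Real.exp_pos _).le)
            (by positivity) (Real.exp_pos _).le
      _ = Real.exp ((1+|ν|) * u - (z/2) * Real.cosh u) := by
          rw [← Real.exp_add, ← Real.exp_add]; ring_nf
  · filter_upwards with u t _
    have h : HasDerivAt (fun t : ℝ => Real.exp (-t * Real.cosh u))
        (-Real.cosh u * Real.exp (-t * Real.cosh u)) t := by
      have := ((hasDerivAt_id t).neg.mul_const (Real.cosh u)).exp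
      simpa [mul_comm] using this
    have := h.mul_const (Real.cosh (ν * u))
    convert this using 1
    · rfl
    ring

/-- Lemma 3.1(1): `z K_ν'(z)/K_ν(z) → -∞` as `z → +∞`. -/
theorem besselK_logDeriv_tendsto_atTop (ν : ℝ) :
    Tendsto (fun z : ℝ => z * deriv (besselK ν) z / besselK ν z) atTop atBot := by
  apply tendsto_atBot_mono' _ _ tendsto_neg_atTop_atBot
  filter_upwards [eventually_gt_atTop (0:ℝ)] with z hz
  have hK := besselK_pos ν hz
  have hD := (besselK_hasDerivAt ν hz).deriv
  have hle : deriv (besselK ν) z ≤ -besselK ν z := by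
    rw [hD, besselK, ← integral_neg]
    apply setIntegral_mono_on
    · exact (besselK_deriv_integrand_integrable ν z hz).neg
    · exact (besselK_integrand_integrable ν z hz).neg
    · exact measurableSet_Ioi
    · intro u hu
      have h1 : (1:ℝ) ≤ Real.cosh u := Real.one_le_cosh u
      have h2 : (0:ℝ) < Real.exp (-z * Real.cosh u) * Real.cosh (ν*u) := by positivity
      nlinarith
  rw [div_le_iff₀ hK]
  nlinarith
end
end
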